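/- Let A and B be finite abelian groups of orders m and n respectively, with m ≥ 3, and suppose B admits a complete mapping, i.e., a bijection φ : B → B such that the map g ↦ −g + φ(g) is also a bijection of B. If the cycle C_m is A-cordial, then the disjoint union of n copies of the cycle C_m is (A × B)-cordial. -/

import Mathlib

/-- The edge labeling induced by a vertex labeling `c`: edge `{u, v}` gets label `c u + c v`. -/
def edgeLabel {V A : Type*} [AddCommMonoid A] (c : V → A) : Sym2 V → A :=
  Sym2.lift ⟨fun u v => c u + c v, fun _ _ => add_comm _ _⟩

/-- `c` is an `A`-cordial labeling of `G`: the vertex-label classes differ in size by at most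
one, and the induced edge-label classes differ in size by at most one. -/
def IsCordialLabeling {V A : Type*} [AddCommMonoid A] (G : SimpleGraph V) (c : V → A) : Prop :=
  (∀ a b : A, {v : V | c v = a}.ncard ≤ {v : V | c v = b}.ncard + 1) ∧
  (∀ a b : A, {e ∈ G.edgeSet | edgeLabel c e = a}.ncard ≤
      {e ∈ G.edgeSet | edgeLabel c e = b}.ncard + 1)

/-- A graph `G` is `A`-cordial if it admits an `A`-cordial labeling. -/
def IsCordial (A : Type*) [AddCommMonoid A] {V : Type*} (G : SimpleGraph V) : Prop :=
  ∃ c : V → A, IsCordialLabeling G c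

open SimpleGraph

/-- The disjoint union of `n` copies of a graph `G`, one copy for each element of `Fin n`. -/
def disjointCopies {V : Type*} (n : ℕ) (G : SimpleGraph V) : SimpleGraph (Fin n × V) where
  Adj x y := x.1 = y.1 ∧ G.Adj x.2 y.2
  symm := ⟨fun _ _ ⟨h1, h2⟩ => ⟨h1.symm, h2.symm⟩⟩
  loopless := ⟨fun x hx => G.loopless.irrefl x.2 hx.2⟩


open Finset in
lemma fiber_lemma {X Y : Type*} [Fintype X] [Fintype Y] (S : Set X) (f : X → Y)
    (hcard : S.ncard = Fintype.card Y)
    (h : ∀ a b : Y, {x ∈ S | f x = a}.ncard ≤ {x ∈ S | f x = b}.ncard + 1) :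
    ∀ a : Y, ∃! x, x ∈ S ∧ f x = a := by
  classical
  set T : Finset X := S.toFinset with hT
  have hn : ∀ a : Y, {x ∈ S | f x = a}.ncard = (T.filter (fun x => f x = a)).card := by
    intro a
    rw [← Set.ncard_coe_finset]
    congr 1
    ext x
    simp [hT, Set.mem_toFinset]
  have hf : ∀ a b : Y, (T.filter (fun x => f x = a)).card ≤ (T.filter (fun x => f x = b)).card + 1 := by
    intro a b; rw [← hn, ← hn]; exact h a b
  have hsum : ∑ a : Y, (T.filter (fun x => f x = a)).card = Fintype.card Y := by
    rw [← Finset.card_eq_sum_card_fiberwise (fun x _ => Finset.mem_univ (f x)), hT,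
      Set.toFinset_card]
    rw [← Nat.card_coe_set_eq, Nat.card_eq_fintype_card] at hcard
    exact hcard
  rcases isEmpty_or_nonempty Y with hY | hY
  · intro a; exact hY.elim a
  have hYpos : 1 ≤ Fintype.card Y := Fintype.card_pos
  have hpos : ∀ a : Y, 1 ≤ (T.filter (fun x => f x = a)).card := by
    by_contra hc
    push_neg at hc
    obtain ⟨a₀, ha₀⟩ := hc
    have ha₀' : (T.filter (fun x => f x = a₀)).card = 0 := by omega
    have hle : ∀ b : Y, (T.filter (fun x => f x = b)).card ≤ 1 := by
      intro b; have := hf b a₀; omega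
    have h1 : (T.filter (fun x => f x = a₀)).card
        + ∑ a ∈ Finset.univ.erase a₀, (T.filter (fun x => f x = a)).card
        = Fintype.card Y :=
      (Finset.add_sum_erase Finset.univ (fun b => (T.filter (fun x => f x = b)).card)
        (Finset.mem_univ a₀)).trans hsum
    have h2 : ∑ a ∈ Finset.univ.erase a₀, (T.filter (fun x => f x = a)).card
        ≤ (Finset.univ.erase a₀).card • 1 :=
      Finset.sum_le_card_nsmul _ _ 1 (fun a _ => hle a)
    rw [Finset.card_erase_of_mem (Finset.mem_univ a₀), Finset.card_univ, smul_eq_mul, mul_one] at h2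
    omega
  have hone : ∀ a : Y, (T.filter (fun x => f x = a)).card = 1 := by
    intro a
    have h1 : (T.filter (fun x => f x = a)).card
        + ∑ b ∈ Finset.univ.erase a, (T.filter (fun x => f x = b)).card
        = Fintype.card Y :=
      (Finset.add_sum_erase Finset.univ (fun b => (T.filter (fun x => f x = b)).card)
        (Finset.mem_univ a)).trans hsum
    have h2 : (Finset.univ.erase a).card • 1
        ≤ ∑ b ∈ Finset.univ.erase a, (T.filter (fun x => f x = b)).card :=
      Finset.card_nsmul_le_sum _ _ 1 (fun b _ => hpos b)
    rw [Finset.card_erase_of_mem (Finset.mem_univ a), Finset.card_univ, smul_eq_mul, mul_one] at h2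
    have := hpos a
    omega
  intro a
  obtain ⟨x, hx⟩ := Finset.card_eq_one.mp (hone a)
  have hxm : x ∈ T.filter (fun x => f x = a) := hx ▸ Finset.mem_singleton_self x
  rw [Finset.mem_filter, hT, Set.mem_toFinset] at hxm
  refine ⟨x, hxm, ?_⟩
  intro y ⟨hy1, hy2⟩
  have : y ∈ T.filter (fun x => f x = a) := by
    rw [Finset.mem_filter, hT, Set.mem_toFinset]; exact ⟨hy1, hy2⟩
  rw [hx, Finset.mem_singleton] at this
  exact this

def dlab {B : Type*} [AddCommGroup B] (φ : B → B) (g : B) (k : ℕ) : B :=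
  if k = 0 then g - φ g else if k % 2 = 1 then -g else φ g

section dlab
variable {B : Type*} [AddCommGroup B] {φ : B → B}
  (hφ : Function.Bijective φ) (hθ : Function.Bijective (fun g : B => -g + φ g))

include hφ hθ

lemma dlab_sub_bij : Function.Bijective (fun g : B => g - φ g) := by
  have : (fun g : B => g - φ g) = (fun x : B => -x) ∘ (fun g : B => -g + φ g) := by
    funext g; simp [sub_eq_add_neg]; abel
  rw [this]
  exact (neg_involutive (G := B)).bijective.comp hθ

lemma dlab_negφ_bij : Function.Bijective (fun g : B => -φ g) :=
  (neg_involutive (G := B)).bijective.comp hφ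

lemma dlab_vertex_bij (k : ℕ) : Function.Bijective (fun g : B => dlab φ g k) := by
  unfold dlab
  rcases eq_or_ne k 0 with hk | hk
  · simpa [hk] using dlab_sub_bij hφ hθ
  rcases eq_or_ne (k % 2) 1 with hk2 | hk2
  · simpa [hk, hk2] using (neg_involutive (G := B)).bijective
  · simpa [hk, hk2] using hφ

lemma dlab_succ_bij {m : ℕ} (hm : 3 ≤ m) {a b : ℕ} (ha : a < m) (hb : b = (a + 1) % m) :
    Function.Bijective (fun g : B => dlab φ g a + dlab φ g b) := by
  rcases eq_or_ne a 0 with ha0 | ha0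
  · -- a = 0, b = 1
    have hb1 : b = 1 := by
      subst hb ha0; simpa using Nat.mod_eq_of_lt (show 0 + 1 < m by omega)
    have : (fun g : B => dlab φ g a + dlab φ g b) = fun g : B => -φ g := by
      funext g; simp [dlab, ha0, hb1]; abel
    rw [this]; exact dlab_negφ_bij hφ hθ
  rcases Nat.lt_or_ge (a + 1) m with hlt | hge
  · -- b = a + 1, no wrap, a ≠ 0, b ≠ 0
    have hb1 : b = a + 1 := by rw [hb, Nat.mod_eq_of_lt hlt]
    have hb0 : b ≠ 0 := by omega
    rcases eq_or_ne (a % 2) 1 with hp | hp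
    · have hbp : b % 2 ≠ 1 := by omega
      have : (fun g : B => dlab φ g a + dlab φ g b) = fun g : B => -g + φ g := by
        funext g; simp [dlab, ha0, hb0, hp, hbp]
      rw [this]; exact hθ
    · have hbp : b % 2 = 1 := by omega
      have : (fun g : B => dlab φ g a + dlab φ g b) = fun g : B => -g + φ g := by
        funext g; simp [dlab, ha0, hb0, hp, hbp]; abel
      rw [this]; exact hθ
  · -- wrap: a = m - 1, b = 0
    have hb0 : b = 0 := by
      subst hb
      have hma : a + 1 = m := by omega
      rw [hma, Nat.mod_self]
    rcases eq_or_ne (a % 2) 1 with hp | hp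
    · have : (fun g : B => dlab φ g a + dlab φ g b) = fun g : B => -φ g := by
        funext g; simp [dlab, ha0, hb0, hp]; abel
      rw [this]; exact dlab_negφ_bij hφ hθ
    · have : (fun g : B => dlab φ g a + dlab φ g b) = fun g : B => g := by
        funext g; simp [dlab, ha0, hb0, hp]
      rw [this]; exact Function.bijective_id

lemma dlab_adj_bij {m : ℕ} (hm : 3 ≤ m) {u v : Fin m} (h : (cycleGraph m).Adj u v) :
    Function.Bijective (fun g : B => dlab φ g u.val + dlab φ g v.val) := by
  obtain ⟨k, rfl⟩ : ∃ k, m = k + 3 := ⟨m - 3, by omega⟩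
  rw [cycleGraph_adj'] at h
  have hone : (1 : Fin (k + 3)).val = 1 := Fin.val_one (k + 1)
  rcases h with h | h
  · -- (u - v).val = 1, i.e. u = v + 1
    have hu : u = v + 1 := by
      have : u - v = 1 := by
        apply Fin.val_injective; rw [h, hone]
      rw [← this]; abel
    have huv : u.val = (v.val + 1) % (k + 3) := by
      rw [hu, Fin.add_def, hone]
    have : (fun g : B => dlab φ g u.val + dlab φ g v.val)
        = fun g : B => dlab φ g v.val + dlab φ g u.val := by
      funext g; exact add_comm _ _
    rw [this]
    exact dlab_succ_bij hφ hθ hm v.isLt huv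
  · have hv : v = u + 1 := by
      have : v - u = 1 := by
        apply Fin.val_injective; rw [h, hone]
      rw [← this]; abel
    have huv : v.val = (u.val + 1) % (k + 3) := by
      rw [hv, Fin.add_def, hone]
    exact dlab_succ_bij hφ hθ hm u.isLt huv

end dlab


/-- Let `A` and `B` be finite abelian groups of orders `m ≥ 3` and `n`, and suppose `B`
admits a complete mapping. If `C_m` is `A`-cordial, then `n` disjoint copies of `C_m`
form an `(A × B)`-cordial graph. -/
theorem disjoint_cycles_cordial (A B : Type*) [AddCommGroup A] [Fintype A]
    [AddCommGroup B] [Fintype B] (m n : ℕ)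
    (hA : Fintype.card A = m) (hB : Fintype.card B = n) (hm : 3 ≤ m)
    (φ : B → B) (hφ : Function.Bijective φ)
    (hθ : Function.Bijective (fun g : B => -g + φ g))
    (hAm : IsCordial A (cycleGraph m)) :
    IsCordial (A × B) (disjointCopies n (cycleGraph m)) := by
  classical
  obtain ⟨c, hVc, hEc⟩ := hAm
  have hVfib : ∀ a : A, ∃! v : Fin m, v ∈ (Set.univ : Set (Fin m)) ∧ c v = a := by
    apply fiber_lemma
    · rw [Set.ncard_univ, Nat.card_eq_fintype_card, Fintype.card_fin, hA]
    · intro a b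
      simpa only [Set.sep_univ] using hVc a b
  have hEcard : (cycleGraph m).edgeSet.ncard = Fintype.card A := by
    obtain ⟨k, hk⟩ : ∃ k, m = k + 3 := ⟨m - 3, by omega⟩
    subst hk
    have hdeg := SimpleGraph.sum_degrees_eq_twice_card_edges (cycleGraph (k + 3))
    simp only [cycleGraph_degree_three_le, Finset.sum_const, Finset.card_univ,
      Fintype.card_fin, smul_eq_mul] at hdeg
    rw [← SimpleGraph.coe_edgeFinset, Set.ncard_coe_finset, hA]
    omega
  have hEfib : ∀ a : A, ∃! e, e ∈ (cycleGraph m).edgeSet ∧ edgeLabel c e = a :=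
    fiber_lemma _ _ hEcard hEc
  have β : Fin n ≃ B := (Fintype.equivFinOfCardEq hB).symm
  set C : Fin n × Fin m → A × B := fun p => (c p.2, dlab φ (β p.1) p.2.val) with hC
  have V1 : ∀ x : A × B, {p : Fin n × Fin m | C p = x}.ncard = 1 := by
    rintro ⟨a, b⟩
    obtain ⟨v, ⟨-, hv⟩, hvU⟩ := hVfib a
    obtain ⟨g, hg, hgU⟩ := (dlab_vertex_bij hφ hθ v.val).existsUnique b
    rw [Set.ncard_eq_one]
    refine ⟨(β.symm g, v), Set.eq_singleton_iff_unique_mem.mpr ⟨?_, ?_⟩⟩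
    · show C (β.symm g, v) = (a, b)
      rw [hC]
      simp only [Equiv.apply_symm_apply]
      rw [hv, hg]
    · rintro ⟨i, w⟩ hp
      have hp' : (c w, dlab φ (β i) w.val) = (a, b) := hp
      rw [Prod.mk.injEq] at hp'
      obtain ⟨h1, h2⟩ := hp'
      have hw : w = v := hvU w ⟨Set.mem_univ _, h1⟩
      subst hw
      have hig : β i = g := hgU _ h2
      have hi : i = β.symm g := by rw [← hig, Equiv.symm_apply_apply]
      rw [hi]
  have E1 : ∀ x : A × B,
      {e ∈ (disjointCopies n (cycleGraph m)).edgeSet | edgeLabel C e = x}.ncard = 1 := by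
    rintro ⟨a, b⟩
    obtain ⟨e, he, heU⟩ := hEfib a
    revert he heU
    induction e using Sym2.ind with
    | _ u v =>
    intro he heU
    obtain ⟨heE, heL⟩ := he
    rw [SimpleGraph.mem_edgeSet] at heE
    have heL' : c u + c v = a := by simpa [edgeLabel] using heL
    obtain ⟨g, hg, hgU⟩ := (dlab_adj_bij hφ hθ hm heE).existsUnique b
    rw [Set.ncard_eq_one]
    refine ⟨s((β.symm g, u), (β.symm g, v)), Set.eq_singleton_iff_unique_mem.mpr ⟨⟨?_, ?_⟩, ?_⟩⟩
    · rw [SimpleGraph.mem_edgeSet]; exact ⟨rfl, heE⟩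
    · show edgeLabel C s((β.symm g, u), (β.symm g, v)) = (a, b)
      rw [hC]
      simp only [edgeLabel, Sym2.lift_mk, Prod.mk_add_mk, Equiv.apply_symm_apply]
      rw [heL', hg]
    · intro E hE
      revert hE
      induction E using Sym2.ind with
      | _ p q =>
      intro hE
      obtain ⟨i, w⟩ := p
      obtain ⟨j, z⟩ := q
      obtain ⟨hmem, hlab⟩ := hE
      rw [SimpleGraph.mem_edgeSet] at hmem
      obtain ⟨hij, hadj⟩ := hmem
      dsimp only at hij hadj
      subst hij
      have hlab' : (c w + c z, dlab φ (β i) w.val + dlab φ (β i) z.val) = (a, b) := by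
        simpa [edgeLabel, hC] using hlab
      rw [Prod.mk.injEq] at hlab'
      obtain ⟨h1, h2⟩ := hlab'
      have hwz : s(w, z) = s(u, v) := heU s(w, z)
        ⟨(SimpleGraph.mem_edgeSet (cycleGraph m)).mpr hadj, by simpa [edgeLabel] using h1⟩
      rw [Sym2.eq_iff] at hwz
      rcases hwz with ⟨hw, hz⟩ | ⟨hw, hz⟩
      · rw [hw, hz] at h2
        have hig : β i = g := hgU _ h2
        have hi : i = β.symm g := by rw [← hig, Equiv.symm_apply_apply]
        rw [hw, hz, hi]
      · rw [hw, hz, add_comm] at h2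
        have hig : β i = g := hgU _ h2
        have hi : i = β.symm g := by rw [← hig, Equiv.symm_apply_apply]
        rw [hw, hz, hi]
        exact Sym2.eq_swap
  refine ⟨C, ?_, ?_⟩
  · intro x y
    rw [V1 x, V1 y]
    omega
  · intro x y
    rw [E1 x, E1 y]
    omega
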